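/- Let S be a subring of a commutative ring R, I an ideal of S, f ∈ (T_n(R))[x], and fix 1 ≤ i ≤ j ≤ n. Then the (i,j)-entry of f(C) lies in I for all C ∈ T_n(S) if and only if for every h with i ≤ h ≤ j, the (h,j)-entry of f_{ih}(C) lies in I for all C ∈ T_n(S), where f_{ih} ∈ R[x] is the scalar polynomial formed from the (i,h)-entries of the coefficients of f. -/
import Mathlib

private lemma blockTriangular_pow {n : ℕ} {R : Type*} [CommRing R]
    {C : Matrix (Fin n) (Fin n) R} (hC : C.BlockTriangular id) (k : ℕ) :
    (C ^ k).BlockTriangular id := by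
  induction k with
  | zero => simpa using Matrix.blockTriangular_one
  | succ m ih => rw [pow_succ]; exact ih.mul hC

/-- Let `S` be a subring of `R`, `I` an ideal of `S`, `f ∈ (Tₙ(R))[x]`, `i ≤ j`.
The `(i,j)`-entry of `f(C)` lies in `I` for all `C ∈ Tₙ(S)` iff for every `h` with
`i ≤ h ≤ j`, the `(h,j)`-entry of `f_{ih}(C)` lies in `I` for all `C ∈ Tₙ(S)`. -/
theorem stmt7 (n : ℕ) (R : Type*) [CommRing R] (S : Subring R) (I : Ideal S)
    (f : Polynomial (Matrix (Fin n) (Fin n) R))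
    (hf : ∀ k, (f.coeff k).BlockTriangular id)
    (i j : Fin n) (hij : i ≤ j) :
    (∀ C : Matrix (Fin n) (Fin n) R, C.BlockTriangular id → (∀ a b, C a b ∈ S) →
        ∃ s ∈ I, (s : R) = f.eval C i j)
    ↔ ∀ h ∈ Finset.Icc i j,
        ∀ C : Matrix (Fin n) (Fin n) R, C.BlockTriangular id → (∀ a b, C a b ∈ S) →
          ∃ s ∈ I, (s : R) =
            (Polynomial.aeval C
              (∑ k ∈ f.support, Polynomial.C (f.coeff k i h) * Polynomial.X ^ k)) h j := by
  classical
  set K : AddSubgroup R := AddSubgroup.map S.subtype.toAddMonoidHom I.toAddSubgroup with hK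
  have memK : ∀ r : R, (∃ s ∈ I, (s : R) = r) ↔ r ∈ K := by
    intro r
    simp [hK, AddSubgroup.mem_map, Submodule.mem_toAddSubgroup]
  -- the (h,j) entry of aeval C f_{ih}
  have hrhs : ∀ (C : Matrix (Fin n) (Fin n) R) (h : Fin n),
      (Polynomial.aeval C
          (∑ k ∈ f.support, Polynomial.C (f.coeff k i h) * Polynomial.X ^ k)) h j
        = ∑ k ∈ f.support, f.coeff k i h * (C ^ k) h j := by
    intro C h
    rw [map_sum, Matrix.sum_apply]
    refine Finset.sum_congr rfl fun k _ => ?_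
    rw [map_mul, Polynomial.aeval_C, map_pow, Polynomial.aeval_X, ← Algebra.smul_def,
      Matrix.smul_apply, smul_eq_mul]
  -- entry formula for evaluation at a triangular matrix
  have ent : ∀ (C : Matrix (Fin n) (Fin n) R), C.BlockTriangular id →
      f.eval C i j = ∑ h ∈ Finset.Icc i j, ∑ k ∈ f.support, f.coeff k i h * (C ^ k) h j := by
    intro C hC
    rw [Polynomial.eval_eq_sum, Polynomial.sum_def, Matrix.sum_apply]
    have : ∀ k ∈ f.support, (f.coeff k * C ^ k) i j
        = ∑ h : Fin n, f.coeff k i h * (C ^ k) h j := fun k _ => Matrix.mul_apply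
    rw [Finset.sum_congr rfl this, Finset.sum_comm]
    refine (Finset.sum_subset (Finset.subset_univ _) ?_).symm
    intro h _ hh
    rw [Finset.mem_Icc, not_and_or] at hh
    refine Finset.sum_eq_zero fun k _ => ?_
    rcases hh with hh | hh
    · rw [hf k (show id h < id i from lt_of_not_ge hh), zero_mul]
    · rw [blockTriangular_pow hC k (show id j < id h from lt_of_not_ge hh), mul_zero]
  constructor
  · -- forward
    intro H h0 hh0 C hC hCS
    rw [Finset.mem_Icc] at hh0
    obtain ⟨hih0, hh0j⟩ := hh0
    -- truncation machinery
    let D : (Fin n → Bool) → Matrix (Fin n) (Fin n) R :=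
      fun P => Matrix.of fun a b => if P a then C a b else 0
    have hDtri : ∀ P, (D P).BlockTriangular id := by
      intro P a b hab
      simp only [D, Matrix.of_apply]
      rw [hC hab]; split <;> rfl
    have hDS : ∀ P a b, (D P) a b ∈ S := by
      intro P a b
      simp only [D, Matrix.of_apply]
      split
      · exact hCS a b
      · exact zero_mem S
    have hpow_eq : ∀ (P : Fin n → Bool), (∀ a b, a ≤ b → P a → P b) →
        ∀ k a, P a → ∀ b, (D P ^ k) a b = (C ^ k) a b := by
      intro P hP k
      induction k with
      | zero => intro a _ b; rfl
      | succ m ih =>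
        intro a ha b
        rw [pow_succ', pow_succ', Matrix.mul_apply, Matrix.mul_apply]
        refine Finset.sum_congr rfl fun m' _ => ?_
        have hD : (D P) a m' = C a m' := if_pos ha
        by_cases hc : C a m' = 0
        · rw [hD, hc, zero_mul, zero_mul]
        · have ham : a ≤ m' := le_of_not_gt fun hlt => hc (hC hlt)
          rw [hD, ih m' (hP a m' ham ha) b]
    have hpow_zero : ∀ (P : Fin n → Bool) (k : ℕ) (a b : Fin n),
        ¬ (P a = true) → a ≠ b → (D P ^ k) a b = 0 := by
      intro P k a b ha hab
      cases k with
      | zero => exact Matrix.one_apply_ne hab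
      | succ m =>
        rw [pow_succ', Matrix.mul_apply]
        refine Finset.sum_eq_zero fun m' _ => ?_
        have : (D P) a m' = 0 := if_neg ha
        rw [this, zero_mul]
    have gform : ∀ (P : Fin n → Bool), (∀ a b, a ≤ b → P a → P b) →
        (∀ a, ¬ (P a = true) → a ≠ j) →
        f.eval (D P) i j
          = ∑ h ∈ (Finset.Icc i j).filter (fun h => P h = true),
              ∑ k ∈ f.support, f.coeff k i h * (C ^ k) h j := by
      intro P hP hPj
      rw [ent (D P) (hDtri P), Finset.sum_filter]
      refine Finset.sum_congr rfl fun h _ => ?_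
      by_cases hPh : P h = true
      · rw [if_pos hPh]
        exact Finset.sum_congr rfl fun k _ => by rw [hpow_eq P hP k h hPh j]
      · rw [if_neg hPh]
        refine Finset.sum_eq_zero fun k _ => ?_
        rw [hpow_zero P k h j hPh (hPj h hPh), mul_zero]
    have gmem : ∀ (P : Fin n → Bool), f.eval (D P) i j ∈ K := by
      intro P
      rw [← memK]
      exact H (D P) (hDtri P) (hDS P)
    rw [memK, hrhs]
    by_cases hej : h0 = j
    · subst hej
      have hfil : (Finset.Icc i h0).filter (fun h => decide (h0 ≤ h) = true) = {h0} := by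
        ext a
        simp only [Finset.mem_filter, Finset.mem_Icc, Finset.mem_singleton, decide_eq_true_eq]
        constructor
        · rintro ⟨⟨_, h1⟩, h2⟩; exact le_antisymm h1 h2
        · rintro rfl; exact ⟨⟨hij, le_refl _⟩, le_refl _⟩
      have := gmem (fun a => decide (h0 ≤ a))
      rwa [gform (fun a => decide (h0 ≤ a))
          (fun a b hab ha => decide_eq_true (le_trans (of_decide_eq_true ha) hab))
          (fun a ha => ne_of_lt (lt_of_not_ge fun h => ha (decide_eq_true h))),
        hfil, Finset.sum_singleton] at this
    · have hh0j' : h0 < j := lt_of_le_of_ne hh0j hej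
      have g1 := gmem (fun a => decide (h0 ≤ a))
      have g2 := gmem (fun a => decide (h0 < a))
      rw [gform (fun a => decide (h0 ≤ a))
          (fun a b hab ha => decide_eq_true (le_trans (of_decide_eq_true ha) hab))
          (fun a ha => ne_of_lt (lt_of_lt_of_le
            (lt_of_not_ge fun h => ha (decide_eq_true h)) hh0j))] at g1
      rw [gform (fun a => decide (h0 < a))
          (fun a b hab ha => decide_eq_true (lt_of_lt_of_le (of_decide_eq_true ha) hab))
          (fun a ha => ne_of_lt (lt_of_le_of_lt
            (le_of_not_gt fun h => ha (decide_eq_true h)) hh0j'))] at g2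
      have hins : (Finset.Icc i j).filter (fun h => decide (h0 ≤ h) = true)
          = insert h0 ((Finset.Icc i j).filter (fun h => decide (h0 < h) = true)) := by
        ext a
        rw [Finset.mem_filter, Finset.mem_insert, Finset.mem_filter]
        simp only [Finset.mem_Icc, decide_eq_true_eq]
        constructor
        · rintro ⟨⟨h1, h2⟩, h3⟩
          rcases eq_or_lt_of_le h3 with h | h
          · exact Or.inl h.symm
          · exact Or.inr ⟨⟨h1, h2⟩, h⟩
        · rintro (rfl | ⟨⟨h1, h2⟩, h3⟩)
          · exact ⟨⟨hih0, hh0j⟩, le_refl _⟩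
          · exact ⟨⟨h1, h2⟩, le_of_lt h3⟩
      have hnotmem : h0 ∉ (Finset.Icc i j).filter (fun h => decide (h0 < h) = true) :=
        fun hmem => absurd (of_decide_eq_true (Finset.mem_filter.mp hmem).2) (lt_irrefl h0)
      rw [hins, Finset.sum_insert hnotmem] at g1
      have := AddSubgroup.sub_mem K g1 g2
      rwa [add_sub_cancel_right] at this
  · -- backward
    intro H C hC hCS
    rw [memK, ent C hC]
    refine AddSubgroup.sum_mem K fun h hh => ?_
    have := H h hh C hC hCS
    rwa [memK, hrhs] at this
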